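/- For nonnegative integers $m$ and $u$, the number of partitions of $m$ in which every part is at least $u+1$ equals the sum over all pairs $(i,j)$ of nonnegative integers with $i+uj=m$ of the number of partitions of $i$ whose greatest part is exactly $j$. -/

import Mathlib

open Multiset

namespace ConjAux

/-- number of elements of `s` that are at least `k+1`. -/
def F (s : Multiset ℕ) (k : ℕ) : ℕ := Multiset.card (s.filter (fun x => k + 1 ≤ x))

/-- conjugate multiset -/
def conj (s : Multiset ℕ) : Multiset ℕ := (Multiset.range s.sup).map (F s)

lemma F_anti (s : Multiset ℕ) {k l : ℕ} (h : k ≤ l) : F s l ≤ F s k :=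
  Multiset.card_le_card <| Multiset.monotone_filter_right s (fun x hx => le_trans (by omega) hx)

lemma F_le_card (s : Multiset ℕ) (k : ℕ) : F s k ≤ Multiset.card s :=
  Multiset.card_le_card (Multiset.filter_le _ _)

lemma F_eq_zero (s : Multiset ℕ) {k : ℕ} (h : s.sup ≤ k) : F s k = 0 := by
  rw [F, Multiset.card_eq_zero, Multiset.filter_eq_nil]
  intro a ha hk
  exact absurd (le_trans hk (le_trans (Multiset.le_sup ha) h)) (by omega)

lemma lt_sup_of_F_pos {s : Multiset ℕ} {k : ℕ} (h : 1 ≤ F s k) : k + 1 ≤ s.sup := by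
  obtain ⟨a, ha⟩ := Multiset.card_pos_iff_exists_mem.1 h
  rw [Multiset.mem_filter] at ha
  exact le_trans ha.2 (Multiset.le_sup ha.1)

lemma F_pos_of_lt_sup {s : Multiset ℕ} {k : ℕ} (h : k < s.sup) : 1 ≤ F s k := by
  by_contra hc
  have : F s k = 0 := by omega
  rw [F, Multiset.card_eq_zero, Multiset.filter_eq_nil] at this
  have : s.sup ≤ k := Multiset.sup_le.2 fun a ha => by
    have := this a ha; omega
  omega

lemma mem_conj {s : Multiset ℕ} {a : ℕ} : a ∈ conj s ↔ ∃ k, k < s.sup ∧ F s k = a := by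
  simp [conj, Multiset.mem_map, Multiset.mem_range]

lemma zero_not_mem_conj (s : Multiset ℕ) : 0 ∉ conj s := by
  rw [mem_conj]
  rintro ⟨k, hk, hF⟩
  have := F_pos_of_lt_sup hk
  omega

lemma card_conj (s : Multiset ℕ) : Multiset.card (conj s) = s.sup := by
  simp [conj]

lemma sum_F (s : Multiset ℕ) (N : ℕ) (hN : ∀ x ∈ s, x ≤ N) :
    ∑ k ∈ Finset.range N, F s k = s.sum := by
  induction s using Multiset.induction_on with
  | empty => simp [F]
  | cons a s ih =>
    have ha : a ≤ N := hN a (Multiset.mem_cons_self a s)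
    have hs : ∀ x ∈ s, x ≤ N := fun x hx => hN x (Multiset.mem_cons_of_mem hx)
    have hF : ∀ k, F (a ::ₘ s) k = F s k + (if k + 1 ≤ a then 1 else 0) := by
      intro k
      rw [F, F, Multiset.filter_cons]
      split_ifs <;> simp [add_comm]
    rw [Finset.sum_congr rfl (fun k _ => hF k), Finset.sum_add_distrib, ih hs]
    have : ∑ k ∈ Finset.range N, (if k + 1 ≤ a then 1 else 0) = a := by
      rw [← Finset.card_filter]
      have : Finset.filter (fun k => k + 1 ≤ a) (Finset.range N) = Finset.range a := by
        ext k; simp [Finset.mem_filter, Finset.mem_range]; omega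
      rw [this, Finset.card_range]
    rw [this, Multiset.sum_cons]; ring

lemma sum_conj (s : Multiset ℕ) : (conj s).sum = s.sum := by
  have : (conj s).sum = ∑ k ∈ Finset.range s.sup, F s k := by
    rw [conj, Finset.sum_eq_multiset_sum, Finset.range_val]
  rw [this, sum_F s s.sup (fun x hx => Multiset.le_sup hx)]

lemma F_conj (s : Multiset ℕ) (k : ℕ) :
    F (conj s) k = ((Finset.range s.sup).filter (fun k' => k + 1 ≤ F s k')).card := by
  rw [F, conj, Multiset.filter_map]
  rw [Multiset.card_map]
  rfl

lemma key_iff (g : ℕ → ℕ) (hg : ∀ {k l : ℕ}, k ≤ l → g l ≤ g k) (N : ℕ)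
    (hN : ∀ k, N ≤ k → g k = 0) (n m : ℕ) :
    n + 1 ≤ ((Finset.range N).filter (fun k => m + 1 ≤ g k)).card ↔ m + 1 ≤ g n := by
  set S := (Finset.range N).filter (fun k => m + 1 ≤ g k) with hS
  have hdc : ∀ a ∈ S, ∀ b ≤ a, b ∈ S := by
    intro a ha b hb
    rw [hS, Finset.mem_filter, Finset.mem_range] at *
    exact ⟨by omega, le_trans ha.2 (hg hb)⟩
  have hmem : ∀ k, k ∈ S ↔ k < S.card := by
    intro k
    constructor
    · intro hk
      have hsub : Finset.range (k + 1) ⊆ S := by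
        intro b hb
        rw [Finset.mem_range] at hb
        exact hdc k hk b (by omega)
      have := Finset.card_le_card hsub
      simpa using this
    · intro hk
      by_contra hc
      have hsub : S ⊆ Finset.range k := by
        intro a ha
        rw [Finset.mem_range]
        by_contra h'
        exact hc (hdc a ha k (by omega))
      have := Finset.card_le_card hsub
      simp at this; omega
  constructor
  · intro h
    have := (hmem n).2 (by omega)
    rw [hS, Finset.mem_filter] at this
    exact this.2
  · intro h
    have hn : n < N := by
      by_contra h'
      rw [hN n (by omega)] at h; omega
    have : n ∈ S := by rw [hS, Finset.mem_filter, Finset.mem_range]; exact ⟨hn, h⟩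
    have := (hmem n).1 this
    omega

lemma F_conj_conj (s : Multiset ℕ) (k : ℕ) : F (conj (conj s)) k = F s k := by
  rw [F_conj]
  have key : ∀ k', k + 1 ≤ F (conj s) k' ↔ k' + 1 ≤ F s k := by
    intro k'
    rw [F_conj]
    exact key_iff (F s) (fun h => F_anti s h) s.sup (fun k hk => F_eq_zero s hk) k k'
  have : (Finset.range (conj s).sup).filter (fun k' => k + 1 ≤ F (conj s) k') =
      Finset.range (F s k) := by
    ext k'
    simp only [Finset.mem_filter, Finset.mem_range]
    constructor
    · rintro ⟨_, h2⟩; have := (key k').1 h2; omega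
    · intro h
      have h2 : k + 1 ≤ F (conj s) k' := (key k').2 (by omega)
      exact ⟨lt_sup_of_F_pos (by omega), h2⟩
  rw [this, Finset.card_range]

lemma F_succ (s : Multiset ℕ) (k : ℕ) : F s k = Multiset.count (k + 1) s + F s (k + 1) := by
  induction s using Multiset.induction_on with
  | empty => simp [F]
  | cons a s ih =>
    rw [F, F, Multiset.filter_cons, Multiset.filter_cons, Multiset.count_cons]
    split_ifs <;> simp_all [F] <;> omega

lemma eq_of_F_eq {s t : Multiset ℕ} (hs : 0 ∉ s) (ht : 0 ∉ t) (h : ∀ k, F s k = F t k) :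
    s = t := by
  ext a
  cases a with
  | zero => rw [Multiset.count_eq_zero.2 hs, Multiset.count_eq_zero.2 ht]
  | succ n =>
    have h1 := F_succ s n
    have h2 := F_succ t n
    have := h n
    have := h (n + 1)
    omega

lemma conj_conj {s : Multiset ℕ} (hs : 0 ∉ s) : conj (conj s) = s :=
  eq_of_F_eq (zero_not_mem_conj _) hs (F_conj_conj s)

lemma sup_conj {s : Multiset ℕ} (hs : 0 ∉ s) : (conj s).sup = Multiset.card s := by
  rcases eq_or_ne s 0 with rfl | hne
  · simp [conj]
  · apply le_antisymm
    · apply Multiset.sup_le.2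
      intro a ha
      obtain ⟨k, _, hF⟩ := mem_conj.1 ha
      exact hF ▸ F_le_card s k
    · have hF0 : F s 0 = Multiset.card s := by
        rw [F]
        congr 1
        apply Multiset.filter_eq_self.2
        intro a ha
        have : a ≠ 0 := fun h => hs (h ▸ ha)
        omega
      have hsup : 0 < s.sup := by
        obtain ⟨a, ha⟩ := Multiset.exists_mem_of_ne_zero hne
        have : a ≠ 0 := fun h => hs (h ▸ ha)
        exact lt_of_lt_of_le (by omega) (Multiset.le_sup ha)
      have : Multiset.card s ∈ conj s := mem_conj.2 ⟨0, hsup, hF0⟩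
      exact Multiset.le_sup this

lemma map_sub_sum (s : Multiset ℕ) (u : ℕ) (h : ∀ x ∈ s, u ≤ x) :
    (s.map (fun x => x - u)).sum + u * Multiset.card s = s.sum := by
  induction s using Multiset.induction_on with
  | empty => simp
  | cons a t ih =>
    have ha : u ≤ a := h a (Multiset.mem_cons_self a t)
    have := ih (fun x hx => h x (Multiset.mem_cons_of_mem hx))
    simp only [Multiset.map_cons, Multiset.sum_cons, Multiset.card_cons, Nat.mul_succ]
    omega

lemma map_add_sum (s : Multiset ℕ) (u : ℕ) :
    (s.map (fun x => x + u)).sum = s.sum + u * Multiset.card s := by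
  induction s using Multiset.induction_on with
  | empty => simp
  | cons a t ih =>
    simp only [Multiset.map_cons, Multiset.sum_cons, Multiset.card_cons, Nat.mul_succ]
    omega

/-- The key bijection: partitions of `m` with all parts at least `u+1` and exactly `j`
parts correspond to partitions of `m - u*j` with greatest part exactly `j`. -/
def partEquiv (m u j : ℕ) (h : u * j ≤ m) :
    {μ : Nat.Partition m // (∀ x ∈ μ.parts, u + 1 ≤ x) ∧ Multiset.card μ.parts = j} ≃
      {ν : Nat.Partition (m - u * j) // ν.parts.sup = j} where
  toFun μp :=
    have hge : ∀ x ∈ μp.1.parts, u + 1 ≤ x := μp.2.1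
    have hcard : Multiset.card μp.1.parts = j := μp.2.2
    have ht0 : (0 : ℕ) ∉ μp.1.parts.map (fun x => x - u) := by
      intro h0
      obtain ⟨x, hx, hx0⟩ := Multiset.mem_map.1 h0
      have := hge x hx; omega
    have htsum : (μp.1.parts.map (fun x => x - u)).sum = m - u * j := by
      have := map_sub_sum μp.1.parts u (fun x hx => by have := hge x hx; omega)
      rw [hcard, μp.1.parts_sum] at this
      omega
    ⟨⟨conj (μp.1.parts.map (fun x => x - u)),
      fun {a} ha => by
        have := zero_not_mem_conj (μp.1.parts.map (fun x => x - u))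
        rcases Nat.eq_zero_or_pos a with rfl | hp
        · exact absurd ha this
        · exact hp,
      by rw [sum_conj, htsum]⟩,
      by
        show (conj (μp.1.parts.map (fun x => x - u))).sup = j
        rw [sup_conj ht0, Multiset.card_map, hcard]⟩
  invFun νp :=
    have h0 : (0 : ℕ) ∉ νp.1.parts := fun h0 => absurd (νp.1.parts_pos h0) (by omega)
    have hcard : Multiset.card (conj νp.1.parts) = j := by rw [card_conj, νp.2]
    ⟨⟨(conj νp.1.parts).map (fun x => x + u),
      fun {a} ha => by
        obtain ⟨x, hx, rfl⟩ := Multiset.mem_map.1 ha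
        have : x ≠ 0 := fun hx0 => zero_not_mem_conj νp.1.parts (hx0 ▸ hx)
        omega,
      by
        rw [map_add_sum, sum_conj, νp.1.parts_sum, hcard]
        omega⟩,
      by
        constructor
        · intro x hx
          obtain ⟨y, hy, rfl⟩ := Multiset.mem_map.1
            (show x ∈ (conj νp.1.parts).map (fun x => x + u) from hx)
          have : y ≠ 0 := fun hy0 => zero_not_mem_conj νp.1.parts (hy0 ▸ hy)
          omega
        · rw [Multiset.card_map, hcard]⟩
  left_inv μp := by
    apply Subtype.ext
    apply Nat.Partition.ext
    show (conj (conj (μp.1.parts.map (fun x => x - u)))).map (fun x => x + u) = μp.1.parts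
    have ht0 : (0 : ℕ) ∉ μp.1.parts.map (fun x => x - u) := by
      intro h0
      obtain ⟨x, hx, hx0⟩ := Multiset.mem_map.1 h0
      have := μp.2.1 x hx; omega
    rw [conj_conj ht0, Multiset.map_map]
    rw [Multiset.map_congr (g := id) rfl (fun x hx => by
      have := μp.2.1 x hx
      show x - u + u = x
      omega), Multiset.map_id]
  right_inv νp := by
    apply Subtype.ext
    apply Nat.Partition.ext
    show conj (((conj νp.1.parts).map (fun x => x + u)).map (fun x => x - u)) = νp.1.parts
    have h0 : (0 : ℕ) ∉ νp.1.parts := fun h0 => absurd (νp.1.parts_pos h0) (by omega)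
    rw [Multiset.map_map]
    rw [Multiset.map_congr (g := id) rfl (fun x _ => by show x + u - u = x; omega)]
    rw [Multiset.map_id, conj_conj h0]

end ConjAux

/-- `b i j` is the number of partitions of `i` whose greatest part is exactly `j`
(the empty partition has greatest part `0`). -/
noncomputable def numPartsGreatest (i j : ℕ) : ℕ :=
  Nat.card {μ : Nat.Partition i // μ.parts.sup = j}

lemma card_subtype_eq {α : Type*} [Fintype α] {p : α → Prop} [DecidablePred p]
    (s : Finset α) (h : ∀ x, x ∈ s ↔ p x) :
    Nat.card {x // p x} = s.card := by
  rw [Nat.card_eq_fintype_card]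
  exact (Fintype.card_of_subtype s h)

lemma numPartsGreatest_ne_zero {i j : ℕ} (h : numPartsGreatest i j ≠ 0) : j ≤ i := by
  rw [numPartsGreatest] at h
  have := (Nat.card_ne_zero.1 h).1
  obtain ⟨μ, hμ⟩ := this
  have hle : μ.parts.sup ≤ μ.parts.sum :=
    Multiset.sup_le.2 fun x hx => Multiset.single_le_sum (fun y _ => Nat.zero_le y) x hx
  rw [μ.parts_sum] at hle
  omega

theorem stmt0 (m u : ℕ) :
    Nat.card {μ : Nat.Partition m // ∀ x ∈ μ.parts, u + 1 ≤ x} =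
      ∑ᶠ (i : ℕ) (j : ℕ) (_ : i + u * j = m), numPartsGreatest i j := by
  have hA : ∀ i j : ℕ, (∑ᶠ (_ : i + u * j = m), numPartsGreatest i j) =
      if i + u * j = m then numPartsGreatest i j else 0 := fun i j => finsum_eq_if
  have hB : ∀ i : ℕ, (∑ᶠ j : ℕ, ∑ᶠ (_ : i + u * j = m), numPartsGreatest i j) =
      ∑ j ∈ Finset.range (m + 1), if i + u * j = m then numPartsGreatest i j else 0 := by
    intro i
    rw [show (fun j => ∑ᶠ (_ : i + u * j = m), numPartsGreatest i j) =
        (fun j => if i + u * j = m then numPartsGreatest i j else 0) from funext (hA i)]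
    apply finsum_eq_sum_of_support_subset
    intro j hj
    simp only [Function.mem_support, ne_eq, ite_eq_right_iff, not_forall] at hj
    obtain ⟨hij, hne⟩ := hj
    have := numPartsGreatest_ne_zero hne
    simp only [Finset.coe_range, Set.mem_Iio]
    omega
  rw [show (fun i => ∑ᶠ (j : ℕ) (_ : i + u * j = m), numPartsGreatest i j) =
      (fun i => ∑ j ∈ Finset.range (m + 1),
        if i + u * j = m then numPartsGreatest i j else 0) from funext hB]
  rw [finsum_eq_sum_of_support_subset _ (s := Finset.range (m + 1)) (by
    intro i hi
    simp only [Function.mem_support] at hi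
    obtain ⟨j, _, hj⟩ := Finset.exists_ne_zero_of_sum_ne_zero hi
    simp only [ne_eq, ite_eq_right_iff, not_forall] at hj
    obtain ⟨hij, -⟩ := hj
    simp only [Finset.coe_range, Set.mem_Iio]
    omega)]
  rw [Finset.sum_comm]
  have hC : ∀ j : ℕ, (∑ i ∈ Finset.range (m + 1),
      if i + u * j = m then numPartsGreatest i j else 0) =
      if u * j ≤ m then numPartsGreatest (m - u * j) j else 0 := by
    intro j
    by_cases h : u * j ≤ m
    · rw [if_pos h, Finset.sum_eq_single (m - u * j)]
      · rw [if_pos (by omega)]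
      · intro i _ hne; rw [if_neg (by omega)]
      · intro h'; exact absurd (Finset.mem_range.2 (by omega)) h'
    · rw [if_neg h]
      exact Finset.sum_eq_zero fun i _ => if_neg (by omega)
  rw [Finset.sum_congr rfl (fun j _ => hC j)]
  rw [card_subtype_eq (Finset.univ.filter (fun μ : Nat.Partition m => ∀ x ∈ μ.parts, u + 1 ≤ x))
    (by intro μ; simp)]
  rw [Finset.card_eq_sum_card_fiberwise
    (f := fun μ : Nat.Partition m => Multiset.card μ.parts) (t := Finset.range (m + 1)) (by
      intro μ _
      rw [Finset.mem_coe, Finset.mem_range]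
      show Multiset.card μ.parts < m + 1
      have : Multiset.card μ.parts • 1 ≤ μ.parts.sum :=
        Multiset.card_nsmul_le_sum fun x hx => μ.parts_pos hx
      rw [smul_eq_mul, mul_one, μ.parts_sum] at this
      omega)]
  apply Finset.sum_congr rfl
  intro j _
  rw [Finset.filter_filter]
  by_cases h : u * j ≤ m
  · rw [if_pos h, numPartsGreatest, ← Nat.card_congr (ConjAux.partEquiv m u j h)]
    exact (card_subtype_eq _ (by intro μ; simp)).symm
  · rw [if_neg h, Finset.card_eq_zero, Finset.filter_eq_empty_iff]
    intro μ _
    rintro ⟨h1, h2⟩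
    have : Multiset.card μ.parts • (u + 1) ≤ μ.parts.sum :=
      Multiset.card_nsmul_le_sum h1
    rw [smul_eq_mul, h2, μ.parts_sum] at this
    have h3 : u * j ≤ j * (u + 1) := by
      rw [Nat.mul_add, Nat.mul_comm]; omega
    omega
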